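/- Let m be a prime number and N a natural number such that |Γ(N,d)| < (m−1)/d. Then there is a natural number h with 1 ≤ h < m such that for every f ∈ 𝒯(Γ(N,d)) the Korobov cubature formula with node vector (1, h, h², …, h^{d−1}) is exact: m^{−1} Σ_{ν=1}^m f(2π{ν/m}, 2π{νh/m}, …, 2π{νh^{d−1}/m}) = (2π)^{−d} ∫_{𝕋^d} f(x) dx. -/

import Mathlib

noncomputable section
open scoped BigOperators
open MeasureTheory

/-- The cube `[0, 2π]^d`, representing the torus `𝕋^d`. -/
def cube (d : ℕ) : Set (Fin d → ℝ) := Set.Icc 0 (fun _ => 2 * Real.pi)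

/-- Uniform norm over the torus `𝕋^d = [0, 2π]^d`. -/
def unifNorm {d : ℕ} (f : (Fin d → ℝ) → ℂ) : ℝ :=
  ⨆ x : cube d, ‖f ↑x‖

/-- The exponential `e^{i(k,x)}`. -/
def expFun {d : ℕ} (k : Fin d → ℤ) : (Fin d → ℝ) → ℂ :=
  fun x => Complex.exp (Complex.I * ∑ j, (k j : ℂ) * (x j : ℂ))

/-- `𝒯(Q)`: the space of trigonometric polynomials with frequencies in `Q`. -/
def trigSpace {d : ℕ} (Q : Finset (Fin d → ℤ)) : Submodule ℂ ((Fin d → ℝ) → ℂ) :=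
  Submodule.span ℂ (expFun '' (Q : Set (Fin d → ℤ)))

/-- `R(s) = {k : |k_j| < 2^{s_j}}`. -/
def Rbox {d : ℕ} (s : Fin d → ℕ) : Finset (Fin d → ℤ) :=
  Fintype.piFinset fun j => Finset.Ioo (-(2 ^ (s j) : ℤ)) ((2 : ℤ) ^ (s j))

/-- Best uniform approximation `d(f, 𝒯(Q))_∞`. -/
def distT {d : ℕ} (f : (Fin d → ℝ) → ℂ) (Q : Finset (Fin d → ℤ)) : ℝ :=
  ⨅ u : trigSpace Q, unifNorm (f - (u : (Fin d → ℝ) → ℂ))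

/-- `2π`-periodicity in each variable. -/
def Periodic2Pi {d : ℕ} (f : (Fin d → ℝ) → ℂ) : Prop :=
  ∀ (x : Fin d → ℝ) (j : Fin d), f (x + (2 * Real.pi) • (Pi.single j 1 : Fin d → ℝ)) = f x

/-- The Fibonacci numbers `b_0 = b_1 = 1`, `b_n = b_{n-1} + b_{n-2}`. -/
def fibb : ℕ → ℕ
  | 0 => 1
  | 1 => 1
  | n + 2 => fibb (n + 1) + fibb n

/-- The hyperbolic cross `Γ(N, d)`. -/
def hyperCross (d N : ℕ) : Finset (Fin d → ℤ) :=
  (Fintype.piFinset fun _ : Fin d => Finset.Icc (-(N : ℤ)) (N : ℤ)).filter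
    fun k => (∏ j, max |k j| 1) ≤ (N : ℤ)

/-- The Fibonacci points `y^ν = (2πν/b_n, 2π{ν b_{n-1}/b_n})`. -/
def fibPoint (n ν : ℕ) : Fin 2 → ℝ :=
  ![2 * Real.pi * ν / fibb n, 2 * Real.pi * Int.fract ((↑(ν * fibb (n - 1)) : ℝ) / fibb n)]

/-- The Korobov points `w^ν = (2π{νh_1/m}, …, 2π{νh_d/m})`. -/
def korNode (m : ℕ) {d : ℕ} (h : Fin d → ℤ) (ν : ℕ) : Fin d → ℝ :=
  fun i => 2 * Real.pi * Int.fract ((ν : ℝ) * (h i : ℝ) / (m : ℝ))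

section StmtAux

lemma integral_exp_Icc (k : ℤ) :
    ∫ x in Set.Icc (0:ℝ) (2*Real.pi), Complex.exp (Complex.I * k * x) =
      if k = 0 then (((2*Real.pi : ℝ)) : ℂ) else 0 := by
  rcases eq_or_ne k 0 with hk | hk
  · simp only [hk, if_pos rfl, Int.cast_zero, mul_zero, zero_mul, Complex.exp_zero]
    rw [MeasureTheory.setIntegral_const]
    rw [Real.volume_real_Icc_of_le (by positivity)]
    simp [Real.pi_pos.le, ENNReal.toReal_ofReal, Real.pi_nonneg]
  · rw [if_neg hk, MeasureTheory.integral_Icc_eq_integral_Ioc,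
      ← intervalIntegral.integral_of_le (by positivity)]
    have hc : (Complex.I * k) ≠ 0 := by
      simp [Complex.I_ne_zero, hk]
    rw [integral_exp_mul_complex hc]
    have h1 : Complex.I * (k:ℂ) * ((2*Real.pi : ℝ) : ℂ) = (k:ℂ) * (2*Real.pi*Complex.I) := by
      push_cast; ring
    rw [h1, Complex.exp_int_mul_two_pi_mul_I]
    simp

lemma indicator_cube {d : ℕ} (g : Fin d → ℝ → ℂ) (x : Fin d → ℝ) :
    (cube d).indicator (fun y => ∏ j, g j (y j)) x
      = ∏ j, (Set.Icc (0:ℝ) (2*Real.pi)).indicator (g j) (x j) := by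
  by_cases hx : x ∈ cube d
  · rw [Set.indicator_of_mem hx]
    refine Finset.prod_congr rfl fun j _ => ?_
    rw [Set.indicator_of_mem]
    obtain ⟨h1, h2⟩ := hx
    exact ⟨h1 j, h2 j⟩
  · rw [Set.indicator_of_notMem hx]
    have : ∃ j, x j ∉ Set.Icc (0:ℝ) (2*Real.pi) := by
      by_contra hc
      push_neg at hc
      exact hx ⟨fun j => (hc j).1, fun j => (hc j).2⟩
    obtain ⟨j, hj⟩ := this
    exact (Finset.prod_eq_zero (Finset.mem_univ j) (Set.indicator_of_notMem hj _)).symm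

lemma integral_expFun {d : ℕ} (k : Fin d → ℤ) :
    ∫ x in cube d, expFun k x = if k = 0 then (((2*Real.pi)^d : ℝ) : ℂ) else 0 := by
  have hfac : ∀ x : Fin d → ℝ, expFun k x = ∏ j, Complex.exp (Complex.I * (k j) * (x j : ℂ)) := by
    intro x
    rw [expFun, Finset.mul_sum, Complex.exp_sum]
    exact Finset.prod_congr rfl fun j _ => by ring_nf
  calc ∫ x in cube d, expFun k x
      = ∫ x : Fin d → ℝ, (cube d).indicator (fun y => ∏ j, Complex.exp (Complex.I * (k j) * (y j : ℂ))) x := by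
        have hcube : MeasurableSet (cube d) := measurableSet_Icc
        rw [MeasureTheory.integral_indicator hcube]
        exact setIntegral_congr_fun measurableSet_Icc (fun x _ => hfac x)
    _ = ∫ x : Fin d → ℝ, ∏ j, (Set.Icc (0:ℝ) (2*Real.pi)).indicator (fun t => Complex.exp (Complex.I * (k j) * (t : ℂ))) (x j) := by
        congr 1; ext x; exact indicator_cube (fun j t => Complex.exp (Complex.I * (k j) * (t : ℂ))) x
    _ = ∏ j, ∫ t : ℝ, (Set.Icc (0:ℝ) (2*Real.pi)).indicator (fun t => Complex.exp (Complex.I * (k j) * (t : ℂ))) t := by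
        exact MeasureTheory.integral_fintype_prod_eq_prod _
    _ = ∏ j, ∫ t in Set.Icc (0:ℝ) (2*Real.pi), Complex.exp (Complex.I * (k j) * (t : ℂ)) := by
        exact Finset.prod_congr rfl fun j _ => MeasureTheory.integral_indicator measurableSet_Icc
    _ = ∏ j, if k j = 0 then (((2*Real.pi : ℝ)) : ℂ) else 0 := by
        exact Finset.prod_congr rfl fun j _ => integral_exp_Icc (k j)
    _ = if k = 0 then (((2*Real.pi)^d : ℝ) : ℂ) else 0 := by
        by_cases hk : k = 0
        · simp [hk, Finset.prod_const]
        · rw [if_neg hk]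
          obtain ⟨j, hj⟩ : ∃ j, k j ≠ 0 := by
            by_contra hc; push_neg at hc; exact hk (funext hc)
          exact Finset.prod_eq_zero (Finset.mem_univ j) (if_neg hj)

lemma hyperCross_abs_le {d N : ℕ} {k : Fin d → ℤ} (hk : k ∈ hyperCross d N) (j : Fin d) :
    |k j| ≤ N := by
  rw [hyperCross, Finset.mem_filter, Fintype.mem_piFinset] at hk
  have := hk.1 j
  rw [Finset.mem_Icc] at this
  exact abs_le.mpr this

-- card lower bound: 2N+1 ≤ card when embedding works; we only need N < m later.
lemma hyperCross_card_lower {d N : ℕ} (hd : 0 < d) (hN : 1 ≤ N) :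
    2 * N + 1 ≤ (hyperCross d N).card := by
  classical
  let j0 : Fin d := ⟨0, hd⟩
  let e : ℤ → (Fin d → ℤ) := fun t j => if j = j0 then t else 0
  have hmem : ∀ t ∈ Finset.Icc (-(N:ℤ)) (N:ℤ), e t ∈ hyperCross d N := by
    intro t ht
    rw [Finset.mem_Icc] at ht
    rw [hyperCross, Finset.mem_filter, Fintype.mem_piFinset]
    constructor
    · intro j
      rw [Finset.mem_Icc]
      by_cases hj : j = j0 <;> simp [e, hj] <;> omega
    · have : (∏ j, max |e t j| 1) = max |t| 1 := by
        rw [Finset.prod_eq_single j0]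
        · simp [e]
        · intro b _ hb; simp [e, hb]
        · simp
      rw [this]
      have : |t| ≤ (N:ℤ) := abs_le.mpr ht
      have h1 : (1:ℤ) ≤ N := by exact_mod_cast hN
      omega
  have hinj : Set.InjOn e (Finset.Icc (-(N:ℤ)) (N:ℤ)) := by
    intro a _ b _ hab
    have := congrFun hab j0
    simpa [e] using this
  calc 2 * N + 1 = (Finset.Icc (-(N:ℤ)) (N:ℤ)).card := by
        rw [Int.card_Icc]; omega
    _ ≤ (hyperCross d N).card := Finset.card_le_card_of_injOn e hmem hinj

lemma exists_good (d m N : ℕ) (hd : 0 < d) (hm : m.Prime)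
    (hN : ((hyperCross d N).card : ℝ) < ((m : ℝ) - 1) / d) :
    ∃ h : ℕ, 1 ≤ h ∧ h < m ∧ ∀ k ∈ hyperCross d N, k ≠ 0 →
      ¬ ((m:ℤ) ∣ ∑ j, k j * (h:ℤ) ^ (j:ℕ)) := by
  classical
  have hd' : (0:ℝ) < d := by exact_mod_cast hd
  have hcard : (hyperCross d N).card * d + 1 < m := by
    have h1 : ((hyperCross d N).card : ℝ) * d < (m:ℝ) - 1 := by
      rw [← lt_div_iff₀ hd']  -- card * d < m-1 ↔ card < (m-1)/d
      exact hN
    have : (((hyperCross d N).card * d + 1 : ℕ) : ℝ) < (m : ℝ) := by push_cast; linarith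
    exact_mod_cast this
  haveI : Fact m.Prime := ⟨hm⟩
  haveI : NeZero m := ⟨hm.ne_zero⟩
  -- the bad set
  let bad : (Fin d → ℤ) → Finset ℕ := fun k =>
    (Finset.Icc 1 (m-1)).filter fun h => (∑ j, (k j : ZMod m) * (h : ZMod m) ^ (j:ℕ)) = 0
  have hbadcard : ∀ k ∈ hyperCross d N, k ≠ 0 → (bad k).card ≤ d - 1 := by
    intro k hk hk0
    obtain ⟨j0, hj0⟩ : ∃ j, k j ≠ 0 := by
      by_contra hc; push_neg at hc; exact hk0 (funext hc)
    -- N < m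
    have hN1 : 1 ≤ N := by
      have h1 := hyperCross_abs_le hk j0
      have h0 : 0 < |k j0| := abs_pos.mpr hj0
      have : (1:ℤ) ≤ N := by omega
      exact_mod_cast this
    have hNm : N < m := by
      have h1 := hyperCross_card_lower hd hN1
      have h2 : (hyperCross d N).card ≤ (hyperCross d N).card * d := Nat.le_mul_of_pos_right _ hd
      omega
    -- the polynomial
    set p : Polynomial (ZMod m) := ∑ j : Fin d, Polynomial.C ((k j : ZMod m)) * Polynomial.X ^ (j:ℕ) with hp
    have hpne : p ≠ 0 := by
      intro hzero
      have hcoeff : p.coeff (j0:ℕ) = (k j0 : ZMod m) := by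
        rw [hp, Polynomial.finset_sum_coeff]
        simp only [Polynomial.coeff_C_mul, Polynomial.coeff_X_pow]
        rw [Finset.sum_eq_single j0]
        · simp
        · intro b _ hb
          have hne : (j0:ℕ) ≠ (b:ℕ) := fun hc => hb (Fin.val_injective hc).symm
          simp [hne, hne.symm]
        · simp
      rw [hzero] at hcoeff
      simp only [Polynomial.coeff_zero] at hcoeff
      have : ¬ ((m:ℤ) ∣ k j0) := by
        intro hdvd
        have habs : (m:ℤ) ∣ |k j0| := (dvd_abs _ _).mpr hdvd
        have : (m:ℤ) ≤ |k j0| := Int.le_of_dvd (abs_pos.mpr hj0) habs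
        have := hyperCross_abs_le hk j0
        omega
      apply this
      have := hcoeff.symm
      rwa [eq_comm, ZMod.intCast_zmod_eq_zero_iff_dvd] at hcoeff
    have hdeg : p.natDegree ≤ d - 1 := by
      rw [hp]
      refine Polynomial.natDegree_sum_le_of_forall_le _ _ fun j _ => ?_
      refine le_trans (Polynomial.natDegree_C_mul_le _ _) ?_
      rw [Polynomial.natDegree_X_pow]
      omega
    -- injective map into roots
    have hmaps : ∀ a ∈ bad k, ((a:ℕ) : ZMod m) ∈ p.roots.toFinset := by
      intro h hh
      simp only [bad, Finset.mem_filter, Finset.mem_Icc] at hh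
      rw [Multiset.mem_toFinset, Polynomial.mem_roots hpne]
      rw [Polynomial.IsRoot, hp, Polynomial.eval_finset_sum]
      simp only [Polynomial.eval_mul, Polynomial.eval_C, Polynomial.eval_pow, Polynomial.eval_X]
      exact hh.2
    have hinj : Set.InjOn (fun a : ℕ => ((a:ℕ) : ZMod m)) (bad k) := by
      intro a ha b hb hab
      simp only [bad, Finset.coe_filter, Set.mem_setOf_eq, Finset.mem_Icc] at ha hb
      have ha' : a < m := by omega
      have hb' : b < m := by omega
      have := congrArg ZMod.val hab
      rwa [ZMod.val_cast_of_lt ha', ZMod.val_cast_of_lt hb'] at this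
    have : (bad k).card ≤ p.roots.toFinset.card :=
      Finset.card_le_card_of_injOn _ hmaps hinj
    have h2 : p.roots.toFinset.card ≤ p.natDegree :=
      le_trans (Multiset.toFinset_card_le _) (Polynomial.card_roots' p)
    omega
  -- union of bad sets
  let B : Finset ℕ := ((hyperCross d N).erase 0).biUnion bad
  have hBcard : B.card < m - 1 := by
    have h1 : B.card ≤ ∑ k ∈ (hyperCross d N).erase 0, (bad k).card :=
      Finset.card_biUnion_le
    have h2 : ∑ k ∈ (hyperCross d N).erase 0, (bad k).card ≤
        ((hyperCross d N).erase 0).card * (d-1) := by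
      apply Finset.sum_le_card_nsmul
      intro k hk
      exact hbadcard k (Finset.mem_of_mem_erase hk) (Finset.ne_of_mem_erase hk)
    have h3 : ((hyperCross d N).erase 0).card ≤ (hyperCross d N).card :=
      Finset.card_erase_le
    have h4 : ((hyperCross d N).erase 0).card * (d-1) ≤ (hyperCross d N).card * d :=
      Nat.mul_le_mul h3 (Nat.sub_le d 1)
    omega
  have : ∃ h ∈ Finset.Icc 1 (m-1), h ∉ B := by
    by_contra hc
    push_neg at hc
    have hsub : Finset.Icc 1 (m-1) ⊆ B := hc
    have := Finset.card_le_card hsub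
    rw [Nat.card_Icc] at this
    omega
  obtain ⟨h, hh, hhB⟩ := this
  rw [Finset.mem_Icc] at hh
  have hm2 : 2 ≤ m := hm.two_le
  refine ⟨h, hh.1, by omega, ?_⟩
  intro k hk hk0 hdvd
  apply hhB
  refine Finset.mem_biUnion.mpr ⟨k, Finset.mem_erase.mpr ⟨hk0, hk⟩, ?_⟩
  simp only [bad, Finset.mem_filter, Finset.mem_Icc]
  refine ⟨⟨hh.1, hh.2⟩, ?_⟩
  have : (((∑ j, k j * (h:ℤ) ^ (j:ℕ)) : ℤ) : ZMod m) = 0 :=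
    (ZMod.intCast_zmod_eq_zero_iff_dvd _ _).mpr hdvd
  push_cast at this
  convert this using 2

lemma sum_exp_eq_zero (m : ℕ) (hm : 0 < m) (S : ℤ) (hS : ¬ ((m:ℤ) ∣ S)) :
    ∑ ν ∈ Finset.Icc 1 m, Complex.exp (2*Real.pi*Complex.I*S*ν/m) = 0 := by
  have hm0 : (m:ℂ) ≠ 0 := by exact_mod_cast hm.ne'
  set ω : ℂ := Complex.exp (2*Real.pi*Complex.I*S/m) with hω
  have hterm : ∀ ν : ℕ, Complex.exp (2*Real.pi*Complex.I*S*ν/m) = ω ^ ν := by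
    intro ν
    rw [hω, ← Complex.exp_nat_mul]
    congr 1; field_simp
  have hω1 : ω ≠ 1 := by
    intro heq
    rw [hω, Complex.exp_eq_one_iff] at heq
    obtain ⟨n, hn⟩ := heq
    apply hS
    refine ⟨n, ?_⟩
    have hπ : (Real.pi : ℂ) ≠ 0 := by exact_mod_cast Real.pi_ne_zero
    have h2 : (2 * (Real.pi:ℂ) * Complex.I) ≠ 0 := by
      simp [Real.pi_ne_zero, Complex.I_ne_zero]
    have : (S : ℂ) = (n : ℂ) * m := by
      apply mul_left_cancel₀ h2
      field_simp at hn
      linear_combination (2 * (Real.pi:ℂ) * Complex.I) * hn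
    rw [mul_comm]
    exact_mod_cast this
  have hωm : ω ^ m = 1 := by
    rw [hω, ← Complex.exp_nat_mul]
    have : (m:ℂ) * (2*Real.pi*Complex.I*S/m) = (S:ℂ) * (2*Real.pi*Complex.I) := by
      field_simp
    rw [this, Complex.exp_int_mul_two_pi_mul_I]
  calc ∑ ν ∈ Finset.Icc 1 m, Complex.exp (2*Real.pi*Complex.I*S*ν/m)
      = ∑ ν ∈ Finset.Icc 1 m, ω ^ ν := Finset.sum_congr rfl fun ν _ => hterm ν
    _ = ∑ i ∈ Finset.range m, ω ^ (1 + i) := by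
        rw [← Finset.Ico_add_one_right_eq_Icc, Finset.sum_Ico_eq_sum_range]
        simp
    _ = ω * ∑ i ∈ Finset.range m, ω ^ i := by
        rw [Finset.mul_sum]
        exact Finset.sum_congr rfl fun i _ => by rw [pow_add, pow_one]
    _ = 0 := by rw [geom_sum_eq hω1, hωm]; simp

lemma expFun_korNode {d m : ℕ} (hm : 0 < m) (h k : Fin d → ℤ) (ν : ℕ) :
    expFun k (korNode m h ν) = Complex.exp (2*Real.pi*Complex.I*((∑ j, k j * h j : ℤ))*ν/m) := by
  have hm0 : (m:ℂ) ≠ 0 := by exact_mod_cast hm.ne'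
  simp only [expFun, korNode]
  have key : Complex.I * ∑ j, (k j : ℂ) * (((2 * Real.pi * Int.fract ((ν:ℝ) * (h j : ℝ) / (m:ℝ))) : ℝ) : ℂ)
      = 2*Real.pi*Complex.I*((∑ j, k j * h j : ℤ))*ν/m
        + ((∑ j, k j * (-⌊(ν:ℝ) * (h j : ℝ) / (m:ℝ)⌋) : ℤ) : ℂ) * (2*Real.pi*Complex.I) := by
    simp only [Int.fract]
    push_cast
    simp only [Finset.mul_sum, Finset.sum_mul, Finset.sum_div, ← Finset.sum_add_distrib]
    refine Finset.sum_congr rfl fun j _ => ?_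
    field_simp
    ring
  rw [key, Complex.exp_add, Complex.exp_int_mul_two_pi_mul_I, mul_one]

lemma continuous_expFun {d : ℕ} (k : Fin d → ℤ) : Continuous (expFun k) := by
  unfold expFun
  fun_prop


end StmtAux

/-- existence of an exact Korobov cubature formula with node vector
`(1, h, h², …, h^{d-1})` on `𝒯(Γ(N,d))` when `|Γ(N,d)| < (m-1)/d` (Lemma CL1). -/
theorem stmt13 (d m N : ℕ) (hd : 0 < d) (hm : m.Prime)
    (hN : ((hyperCross d N).card : ℝ) < ((m : ℝ) - 1) / d) :
    ∃ h : ℕ, 1 ≤ h ∧ h < m ∧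
      ∀ f ∈ trigSpace (hyperCross d N),
        (m : ℂ)⁻¹ * ∑ ν ∈ Finset.Icc 1 m,
            f (korNode m (fun i => (h : ℤ) ^ (i : ℕ)) ν) =
          (((2 * Real.pi) ^ d : ℝ) : ℂ)⁻¹ * ∫ x in cube d, f x := by
  obtain ⟨h, hh1, hh2, hgood⟩ := exists_good d m N hd hm hN
  have hm0 : 0 < m := hm.pos
  have hmC : (m:ℂ) ≠ 0 := by exact_mod_cast hm0.ne'
  have h2π : ((2*Real.pi)^d : ℝ) ≠ 0 := by positivity
  have h2πC : (((2*Real.pi)^d : ℝ) : ℂ) ≠ 0 := by exact_mod_cast h2π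
  set hvec : Fin d → ℤ := fun i => (h:ℤ) ^ (i:ℕ) with hhvec
  refine ⟨h, hh1, hh2, ?_⟩
  have main : ∀ f ∈ trigSpace (hyperCross d N), Continuous f ∧
      (m : ℂ)⁻¹ * ∑ ν ∈ Finset.Icc 1 m, f (korNode m hvec ν) =
        (((2 * Real.pi) ^ d : ℝ) : ℂ)⁻¹ * ∫ x in cube d, f x := by
    intro f hf
    refine Submodule.span_induction ?_ ?_ ?_ ?_ hf
    · rintro g ⟨k, hk, rfl⟩
      refine ⟨continuous_expFun k, ?_⟩
      by_cases hk0 : k = 0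
      · subst hk0
        have hval : ∀ ν : ℕ, expFun (0 : Fin d → ℤ) (korNode m hvec ν) = 1 := by
          intro ν; simp [expFun]
        rw [Finset.sum_congr rfl fun ν _ => hval ν, Finset.sum_const, Nat.card_Icc]
        rw [integral_expFun, if_pos rfl]
        simp only [Nat.add_sub_cancel, nsmul_eq_mul, mul_one]
        rw [inv_mul_cancel₀ hmC, inv_mul_cancel₀ h2πC]
      · have hS := hgood k hk hk0
        have hsum : ∑ ν ∈ Finset.Icc 1 m, expFun k (korNode m hvec ν) = 0 := by
          rw [Finset.sum_congr rfl fun ν _ => expFun_korNode hm0 hvec k ν]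
          exact sum_exp_eq_zero m hm0 _ hS
        rw [hsum, integral_expFun, if_neg hk0, mul_zero, mul_zero]
    · refine ⟨continuous_const, ?_⟩
      simp
    · rintro f g hfm hgm ⟨hfc, hfe⟩ ⟨hgc, hge⟩
      refine ⟨hfc.add hgc, ?_⟩
      have hfint : IntegrableOn f (cube d) volume :=
        hfc.continuousOn.integrableOn_compact isCompact_Icc
      have hgint : IntegrableOn g (cube d) volume :=
        hgc.continuousOn.integrableOn_compact isCompact_Icc
      simp only [Pi.add_apply]
      rw [Finset.sum_add_distrib, MeasureTheory.integral_add hfint hgint, mul_add, mul_add,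
        hfe, hge]
    · rintro c f hfm ⟨hfc, hfe⟩
      refine ⟨hfc.const_smul c, ?_⟩
      simp only [Pi.smul_apply, smul_eq_mul]
      rw [← Finset.mul_sum, MeasureTheory.integral_const_mul, mul_comm c]
      calc (↑m)⁻¹ * ((∑ ν ∈ Finset.Icc 1 m, f (korNode m hvec ν)) * c)
          = ((↑m)⁻¹ * ∑ ν ∈ Finset.Icc 1 m, f (korNode m hvec ν)) * c := by ring
        _ = _ := by rw [hfe]; ring
  exact fun f hf => (main f hf).2
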